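/- arXiv:1803.10532 — 2 statements merged into one kernel-verified Lean document; each statement's English description precedes it below -/
import Mathlib

section
/- Let S be an inverse semigroup with zero. The map F ↦ F^u = {A ∈ D(S) : A ∩ F ≠ ∅} is an order isomorphism from the poset of proper filters of S (ordered by inclusion) onto the poset of prime filters of D(S), with inverse P ↦ P^d = {s ∈ S : s↓ ∈ P}. -/
/-- An inverse semigroup: every element has a unique (generalized) inverse. -/
class InverseSemigroup (S : Type*) extends Semigroup S, Inv S where
  mul_inv_mul : ∀ s : S, s * s⁻¹ * s = s
  inv_mul_inv : ∀ s : S, s⁻¹ * s * s⁻¹ = s⁻¹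
  inv_unique : ∀ s t : S, s * t * s = s → t * s * t = t → t = s⁻¹

/-- An inverse semigroup with a zero element. -/
class InverseSemigroupWithZero (S : Type*) extends InverseSemigroup S, Zero S where
  zero_mul : ∀ s : S, 0 * s = 0
  mul_zero : ∀ s : S, s * 0 = 0

section Defs
variable {S : Type*}

/-- The natural partial order on an inverse semigroup: `a ≤ b` iff `a = b (a⁻¹ a)`. -/
def nle [InverseSemigroup S] (a b : S) : Prop := a = b * (a⁻¹ * a)

/-- Compatibility: `a⁻¹ b` and `a b⁻¹` are both idempotent. -/
def compat [InverseSemigroup S] (a b : S) : Prop :=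
  IsIdempotentElem (a⁻¹ * b) ∧ IsIdempotentElem (a * b⁻¹)

/-- Orthogonality: `a⁻¹ b = 0 = a b⁻¹`. -/
def orth [InverseSemigroupWithZero S] (a b : S) : Prop := a⁻¹ * b = 0 ∧ a * b⁻¹ = 0

/-- `u` is the least upper bound (join) of `a` and `b` in the natural partial order. -/
def isJoin [InverseSemigroup S] (u a b : S) : Prop :=
  nle a u ∧ nle b u ∧ ∀ c, nle a c → nle b c → nle u c

/-- `m` is the greatest lower bound (meet) of `a` and `b` in the natural partial order. -/
def isMeet [InverseSemigroup S] (m a b : S) : Prop :=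
  nle m a ∧ nle m b ∧ ∀ c, nle c a → nle c b → nle c m

/-- `c = a ∖ b`: `c ≤ a`, `c ⊥ b` and `a = b ∨ c`. -/
def isDiff [InverseSemigroupWithZero S] (c a b : S) : Prop :=
  nle c a ∧ orth c b ∧ isJoin a b c

end Defs

/-- A distributive inverse semigroup: compatible pairs have joins, and
multiplication distributes over such joins. -/
class DistributiveInverseSemigroup (S : Type*) extends InverseSemigroupWithZero S where
  join_exists : ∀ a b : S, compat a b → ∃ u, isJoin u a b
  mul_join_left : ∀ a b u c : S, isJoin u a b → isJoin (c * u) (c * a) (c * b)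
  mul_join_right : ∀ a b u c : S, isJoin u a b → isJoin (u * c) (a * c) (b * c)

/-- A Boolean inverse semigroup: a distributive inverse semigroup whose idempotents
form a (generalized) Boolean algebra, i.e. relative complements of idempotents exist. -/
class BooleanInverseSemigroup (S : Type*) extends DistributiveInverseSemigroup S where
  relcomp : ∀ e f : S, IsIdempotentElem e → IsIdempotentElem f → nle f e →
    ∃ c, IsIdempotentElem c ∧ isDiff c e f

section Stmt10
variable {S : Type*} [InverseSemigroupWithZero S]

/-- A finitely generated compatible order ideal of `S`: the downward closure of a
finite pairwise-compatible set (an element of `D(S)`). -/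
def IsFGIdeal (A : Set S) : Prop :=
  ∃ F : Finset S, (∀ a ∈ F, ∀ b ∈ F, compat a b) ∧ A = {x : S | ∃ a ∈ F, nle x a}

/-- A proper filter of `S`: nonempty, omits `0`, upward closed, downward directed. -/
def IsProperFilter (F : Set S) : Prop :=
  F.Nonempty ∧ (0 : S) ∉ F ∧ (∀ a ∈ F, ∀ b : S, nle a b → b ∈ F) ∧
    ∀ a ∈ F, ∀ b ∈ F, ∃ c ∈ F, nle c a ∧ nle c b

/-- A prime filter of `D(S)`: a nonempty proper (omitting the zero ideal `{0}`)
upward-closed downward-directed set of finitely generated compatible order ideals,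
such that `A ∪ B ∈ P` implies `A ∈ P` or `B ∈ P`. -/
def IsPrimeFilterD (P : Set (Set S)) : Prop :=
  (∀ A ∈ P, IsFGIdeal A) ∧ P.Nonempty ∧ ({(0 : S)} : Set S) ∉ P ∧
    (∀ A ∈ P, ∀ B : Set S, IsFGIdeal B → A ⊆ B → B ∈ P) ∧
    (∀ A ∈ P, ∀ B ∈ P, ∃ C ∈ P, C ⊆ A ∧ C ⊆ B) ∧
    ∀ A B : Set S, IsFGIdeal A → IsFGIdeal B → A ∪ B ∈ P → A ∈ P ∨ B ∈ P

/-- `F ↦ Fᵘ = {A ∈ D(S) : A ∩ F ≠ ∅}`. -/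
def uMap (F : Set S) : Set (Set S) := {A : Set S | IsFGIdeal A ∧ (A ∩ F).Nonempty}

/-- `P ↦ Pᵈ = {s ∈ S : s↓ ∈ P}`. -/
def dMap (P : Set (Set S)) : Set S := {s : S | {x : S | nle x s} ∈ P}

end Stmt10


section AuxLemmas
variable {S : Type*}

lemma mim [InverseSemigroup S] (a : S) : a * (a⁻¹ * a) = a := by
  rw [← mul_assoc]; exact InverseSemigroup.mul_inv_mul a

lemma imi [InverseSemigroup S] (a : S) : a⁻¹ * (a * a⁻¹) = a⁻¹ := by
  rw [← mul_assoc]; exact InverseSemigroup.inv_mul_inv a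

lemma mimt [InverseSemigroup S] (a t : S) : a * (a⁻¹ * (a * t)) = a * t := by
  rw [← mul_assoc, ← mul_assoc, InverseSemigroup.mul_inv_mul]

lemma imit [InverseSemigroup S] (a t : S) : a⁻¹ * (a * (a⁻¹ * t)) = a⁻¹ * t := by
  rw [← mul_assoc, ← mul_assoc, InverseSemigroup.inv_mul_inv]

lemma idemt [InverseSemigroup S] {e : S} (he : IsIdempotentElem e) (t : S) :
    e * (e * t) = e * t := by
  rw [← mul_assoc, he]

lemma nle_refl [InverseSemigroup S] (a : S) : nle a a := (mim a).symm

lemma inv_inv' [InverseSemigroup S] (a : S) : a⁻¹⁻¹ = a :=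
  (InverseSemigroup.inv_unique a⁻¹ a (InverseSemigroup.inv_mul_inv a)
    (InverseSemigroup.mul_inv_mul a)).symm

lemma idem_inv [InverseSemigroup S] {e : S} (he : IsIdempotentElem e) : e⁻¹ = e :=
  (InverseSemigroup.inv_unique e e (by rw [he, he]) (by rw [he, he])).symm

lemma idem_a'a [InverseSemigroup S] (a : S) : IsIdempotentElem (a⁻¹ * a) := by
  show a⁻¹ * a * (a⁻¹ * a) = a⁻¹ * a
  rw [mul_assoc]; exact imit a a

lemma idem_aa' [InverseSemigroup S] (a : S) : IsIdempotentElem (a * a⁻¹) := by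
  show a * a⁻¹ * (a * a⁻¹) = a * a⁻¹
  rw [mul_assoc]; exact mimt a a⁻¹

lemma fxe_eq [InverseSemigroup S] {e f : S} (he : IsIdempotentElem e)
    (hf : IsIdempotentElem f) : f * ((e * f)⁻¹ * e) = (e * f)⁻¹ := by
  apply InverseSemigroup.inv_unique (e * f)
  · simp only [mul_assoc]
    rw [idemt hf, idemt he, ← mul_assoc e f]
    exact mim (e * f)
  · simp only [mul_assoc]
    rw [idemt he, idemt hf, ← mul_assoc e f, imit (e * f) e]

lemma idem_mul [InverseSemigroup S] {e f : S} (he : IsIdempotentElem e)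
    (hf : IsIdempotentElem f) : IsIdempotentElem (e * f) := by
  have key := fxe_eq he hf
  have hx : IsIdempotentElem (e * f)⁻¹ := by
    show (e * f)⁻¹ * (e * f)⁻¹ = (e * f)⁻¹
    calc (e * f)⁻¹ * (e * f)⁻¹
        = f * ((e * f)⁻¹ * e) * (f * ((e * f)⁻¹ * e)) := by rw [key]
      _ = f * ((e * f)⁻¹ * (e * (f * ((e * f)⁻¹ * e)))) := by simp only [mul_assoc]
      _ = f * ((e * f)⁻¹ * (e * f * ((e * f)⁻¹ * e))) := by rw [← mul_assoc e f]
      _ = f * ((e * f)⁻¹ * e) := by rw [imit (e * f) e]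
      _ = (e * f)⁻¹ := key
  have h2 : (e * f)⁻¹ = e * f := (idem_inv hx).symm.trans (inv_inv' (e * f))
  exact h2 ▸ hx

lemma idem_comm [InverseSemigroup S] {e f : S} (he : IsIdempotentElem e)
    (hf : IsIdempotentElem f) : e * f = f * e := by
  have hef := idem_mul he hf
  have hfe := idem_mul hf he
  have : f * e = (e * f)⁻¹ := by
    apply InverseSemigroup.inv_unique (e * f)
    · simp only [mul_assoc]
      rw [idemt hf, idemt he, ← mul_assoc e f]
      exact hef
    · simp only [mul_assoc]
      rw [idemt he, idemt hf, ← mul_assoc f e]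
      exact hfe
  rw [this, idem_inv hef]

lemma mul_inv_rev' [InverseSemigroup S] (a b : S) : (a * b)⁻¹ = b⁻¹ * a⁻¹ := by
  symm
  apply InverseSemigroup.inv_unique (a * b)
  · simp only [mul_assoc]
    rw [← mul_assoc b b⁻¹, ← mul_assoc a⁻¹ a, ← mul_assoc (b * b⁻¹),
      idem_comm (idem_aa' b) (idem_a'a a), mul_assoc (a⁻¹ * a),
      InverseSemigroup.mul_inv_mul, ← mul_assoc a, mim]
  · simp only [mul_assoc]
    rw [← mul_assoc a⁻¹ a, ← mul_assoc b b⁻¹, ← mul_assoc (a⁻¹ * a),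
      idem_comm (idem_a'a a) (idem_aa' b), mul_assoc (b * b⁻¹),
      InverseSemigroup.inv_mul_inv, ← mul_assoc b⁻¹, imi]

lemma nle_of_idem [InverseSemigroup S] {a b e : S} (he : IsIdempotentElem e)
    (h : a = b * e) : nle a b := by
  have ha : a⁻¹ = e * b⁻¹ := by rw [h, mul_inv_rev', idem_inv he]
  show a = b * (a⁻¹ * a)
  rw [ha, h]
  simp only [mul_assoc]
  rw [← mul_assoc b⁻¹ b, ← mul_assoc e, idem_comm he (idem_a'a b),
    mul_assoc (b⁻¹ * b), he, ← mul_assoc b, mim]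

lemma nle_trans [InverseSemigroup S] {a b c : S} (hab : nle a b) (hbc : nle b c) :
    nle a c := by
  apply nle_of_idem (idem_mul (idem_a'a b) (idem_a'a a))
  rw [← mul_assoc, ← hbc, ← hab]

lemma compat_self [InverseSemigroup S] (a : S) : compat a a :=
  ⟨idem_a'a a, idem_aa' a⟩

variable [InverseSemigroupWithZero S]

lemma nle_zero_iff (x : S) : nle x 0 ↔ x = 0 := by
  constructor
  · intro h
    rw [h, ← mul_assoc, InverseSemigroupWithZero.zero_mul,
      InverseSemigroupWithZero.zero_mul]
  · rintro rfl; exact nle_refl 0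

lemma principal_fg (a : S) : IsFGIdeal {x : S | nle x a} := by
  refine ⟨{a}, ?_, ?_⟩
  · intro b hb c hc
    simp only [Finset.mem_singleton] at hb hc
    rw [hb, hc]; exact compat_self a
  · ext x; simp only [Set.mem_setOf_eq, Finset.mem_singleton]
    constructor
    · intro h; exact ⟨a, rfl, h⟩
    · rintro ⟨b, rfl, h⟩; exact h

lemma zero_ideal_fg : IsFGIdeal ({(0 : S)} : Set S) := by
  refine ⟨{0}, ?_, ?_⟩
  · intro b hb c hc
    simp only [Finset.mem_singleton] at hb hc
    rw [hb, hc]; exact compat_self 0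
  · ext x
    simp only [Set.mem_singleton_iff, Set.mem_setOf_eq, Finset.mem_singleton]
    constructor
    · rintro rfl; exact ⟨0, rfl, nle_refl 0⟩
    · rintro ⟨b, rfl, h⟩; exact (nle_zero_iff x).1 h

lemma fg_downclosed {A : Set S} (hA : IsFGIdeal A) {x y : S} (hx : x ∈ A)
    (hyx : nle y x) : y ∈ A := by
  obtain ⟨F, -, rfl⟩ := hA
  obtain ⟨a, ha, hxa⟩ := hx
  exact ⟨a, ha, nle_trans hyx hxa⟩

lemma principal_subset {a b : S} (h : nle a b) :
    {x : S | nle x a} ⊆ {x : S | nle x b} := fun _ hx => nle_trans hx h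

lemma exists_principal_mem {P : Set (Set S)} (hP : IsPrimeFilterD P) {A : Set S}
    (hA : A ∈ P) : ∃ a ∈ A, {x : S | nle x a} ∈ P := by
  classical
  obtain ⟨hfg, -, hnz, hup, -, hpr⟩ := hP
  obtain ⟨F, hcomp, rfl⟩ := hfg A hA
  suffices h : ∃ a ∈ F, {x : S | nle x a} ∈ P by
    obtain ⟨a, haF, haP⟩ := h
    exact ⟨a, ⟨a, haF, nle_refl a⟩, haP⟩
  clear hfg
  induction F using Finset.induction_on with
  | empty =>
    exfalso
    apply hnz
    apply hup _ hA _ zero_ideal_fg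
    rintro x ⟨a, ha, -⟩
    exact absurd ha (by simp)
  | @insert a F haF ih =>
    have hsplit : {x : S | ∃ b ∈ insert a F, nle x b} =
        {x : S | nle x a} ∪ {x : S | ∃ b ∈ F, nle x b} := by
      ext x
      simp only [Set.mem_setOf_eq, Set.mem_union, Finset.mem_insert]
      constructor
      · rintro ⟨b, hb | hb, hxb⟩
        · exact Or.inl (hb ▸ hxb)
        · exact Or.inr ⟨b, hb, hxb⟩
      · rintro (h | ⟨b, hb, hxb⟩)
        · exact ⟨a, Or.inl rfl, h⟩
        · exact ⟨b, Or.inr hb, hxb⟩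
    have hFcomp : ∀ b ∈ F, ∀ c ∈ F, compat b c := fun b hb c hc =>
      hcomp b (Finset.mem_insert_of_mem hb) c (Finset.mem_insert_of_mem hc)
    have hFfg : IsFGIdeal {x : S | ∃ b ∈ F, nle x b} := ⟨F, hFcomp, rfl⟩
    rw [hsplit] at hA
    rcases hpr _ _ (principal_fg a) hFfg hA with h | h
    · exact ⟨a, Finset.mem_insert_self a F, h⟩
    · obtain ⟨b, hb, hbP⟩ := ih hFcomp h
      exact ⟨b, Finset.mem_insert_of_mem hb, hbP⟩

end AuxLemmas

/-- `F ↦ Fᵘ` is an order isomorphism from the proper filters of `S` onto the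
prime filters of `D(S)`, with inverse `P ↦ Pᵈ`. -/
theorem stmt10 {S : Type*} [InverseSemigroupWithZero S] :
    (∀ F : Set S, IsProperFilter F → IsPrimeFilterD (uMap F)) ∧
    (∀ P : Set (Set S), IsPrimeFilterD P → IsProperFilter (dMap P)) ∧
    (∀ F : Set S, IsProperFilter F → dMap (uMap F) = F) ∧
    (∀ P : Set (Set S), IsPrimeFilterD P → uMap (dMap P) = P) ∧
    ∀ F₁ F₂ : Set S, IsProperFilter F₁ → IsProperFilter F₂ →
      (F₁ ⊆ F₂ ↔ uMap F₁ ⊆ uMap F₂) := by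
  have uMap_prime : ∀ F : Set S, IsProperFilter F → IsPrimeFilterD (uMap F) := by
    intro F hF
    obtain ⟨⟨f0, hf0⟩, hz, hup, hdir⟩ := hF
    refine ⟨fun A hA => hA.1, ?_, ?_, ?_, ?_, ?_⟩
    · exact ⟨{x : S | nle x f0}, principal_fg f0, f0, nle_refl f0, hf0⟩
    · rintro ⟨-, x, hx1, hx2⟩
      rw [Set.mem_singleton_iff] at hx1
      exact hz (hx1 ▸ hx2)
    · rintro A ⟨-, x, hx1, hx2⟩ B hBfg hAB
      exact ⟨hBfg, x, hAB hx1, hx2⟩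
    · rintro A ⟨hAfg, a, haA, haF⟩ B ⟨hBfg, b, hbB, hbF⟩
      obtain ⟨c, hcF, hca, hcb⟩ := hdir a haF b hbF
      refine ⟨{x : S | nle x c}, ⟨principal_fg c, c, nle_refl c, hcF⟩, ?_, ?_⟩
      · exact fun x hx => fg_downclosed hAfg haA (nle_trans hx hca)
      · exact fun x hx => fg_downclosed hBfg hbB (nle_trans hx hcb)
    · rintro A B hAfg hBfg ⟨-, x, hx1, hx2⟩
      rcases hx1 with hx1 | hx1
      · exact Or.inl ⟨hAfg, x, hx1, hx2⟩
      · exact Or.inr ⟨hBfg, x, hx1, hx2⟩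
  have dMap_proper : ∀ P : Set (Set S), IsPrimeFilterD P → IsProperFilter (dMap P) := by
    intro P hP
    obtain ⟨A0, hA0⟩ := hP.2.1
    have hnz := hP.2.2.1
    have hup := hP.2.2.2.1
    have hdir := hP.2.2.2.2.1
    refine ⟨?_, ?_, ?_, ?_⟩
    · obtain ⟨a, -, haP⟩ := exists_principal_mem hP hA0
      exact ⟨a, haP⟩
    · intro h0
      apply hnz
      have h0' : {x : S | nle x 0} ∈ P := h0
      have heq : {x : S | nle x 0} = ({(0 : S)} : Set S) := by
        ext x; simpa using nle_zero_iff x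
      rwa [heq] at h0'
    · intro a ha b hab
      exact hup _ ha _ (principal_fg b) (principal_subset hab)
    · intro a ha b hb
      obtain ⟨C, hCP, hCa, hCb⟩ := hdir _ ha _ hb
      obtain ⟨c, hcC, hcP⟩ := exists_principal_mem hP hCP
      exact ⟨c, hcP, hCa hcC, hCb hcC⟩
  refine ⟨uMap_prime, dMap_proper, ?_, ?_, ?_⟩
  · intro F hF
    ext s
    constructor
    · rintro ⟨-, x, hxs, hxF⟩
      exact hF.2.2.1 x hxF s hxs
    · intro hs
      exact ⟨principal_fg s, s, nle_refl s, hs⟩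
  · intro P hP
    ext A
    constructor
    · rintro ⟨hAfg, a, haA, haP⟩
      exact hP.2.2.2.1 _ haP A hAfg (fun x hx => fg_downclosed hAfg haA hx)
    · intro hA
      obtain ⟨a, haA, haP⟩ := exists_principal_mem hP hA
      exact ⟨hP.1 A hA, a, haA, haP⟩
  · intro F₁ F₂ hF₁ hF₂
    constructor
    · rintro h A ⟨hAfg, x, hx1, hx2⟩
      exact ⟨hAfg, x, hx1, h hx2⟩
    · intro h s hs
      have : {x : S | nle x s} ∈ uMap F₂ := h ⟨principal_fg s, s, nle_refl s, hs⟩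
      obtain ⟨-, x, hxs, hxF⟩ := this
      exact hF₂.2.2.1 x hxF s hxs
end

section
/- Let S be a ramified inverse semigroup with zero. Then every finitely generated compatible order ideal {a₁,…,aₙ}↓ equals {b₁,…,bₘ}↓ for some pairwise orthogonal set {b₁,…,bₘ} ⊆ {a₁,…,aₙ}. -/
section AuxLemmas
variable {S : Type*} [InverseSemigroup S]

open InverseSemigroup

lemma aux_inv_inv (a : S) : a⁻¹⁻¹ = a :=
  (inv_unique a⁻¹ a (inv_mul_inv a) (mul_inv_mul a)).symm

lemma aux_idem_inv {e : S} (he : IsIdempotentElem e) : e⁻¹ = e :=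
  (inv_unique e e (by rw [he, he]) (by rw [he, he])).symm

lemma aux_inv_mul_idem (a : S) : IsIdempotentElem (a⁻¹ * a) := by
  show a⁻¹ * a * (a⁻¹ * a) = a⁻¹ * a
  calc a⁻¹ * a * (a⁻¹ * a) = a⁻¹ * (a * a⁻¹ * a) := by
        simp only [mul_assoc]
    _ = a⁻¹ * a := by rw [mul_inv_mul]

lemma aux_mul_inv_idem (a : S) : IsIdempotentElem (a * a⁻¹) := by
  show a * a⁻¹ * (a * a⁻¹) = a * a⁻¹
  calc a * a⁻¹ * (a * a⁻¹) = a * a⁻¹ * a * a⁻¹ := by simp only [mul_assoc]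
    _ = a * a⁻¹ := by rw [mul_inv_mul]

/-- Product of idempotents is idempotent. -/
lemma aux_idem_mul {e f : S} (he : IsIdempotentElem e) (hf : IsIdempotentElem f) :
    IsIdempotentElem (e * f) := by
  set x := (e * f)⁻¹ with hx
  have hxe : e * f * x * (e * f) = e * f := mul_inv_mul (e * f)
  have hx2 : x * (e * f) * x = x := inv_mul_inv (e * f)
  have key1 : (e * f) * (f * x * e) * (e * f) = e * f := by
    calc (e * f) * (f * x * e) * (e * f)
        = e * (f * f) * x * (e * e) * f := by simp only [mul_assoc]
      _ = e * f * x * (e * f) := by rw [hf, he]; simp only [mul_assoc]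
      _ = e * f := hxe
  have key2 : (f * x * e) * (e * f) * (f * x * e) = f * x * e := by
    calc (f * x * e) * (e * f) * (f * x * e)
        = f * (x * ((e * e) * ((f * f) * (x * e)))) := by simp only [mul_assoc]
      _ = f * (x * (e * (f * (x * e)))) := by rw [he, hf]
      _ = f * (x * (e * f) * x * e) := by simp only [mul_assoc]
      _ = f * x * e := by rw [hx2]; simp only [mul_assoc]
  have hfxe : f * x * e = x := inv_unique (e * f) (f * x * e) key1 key2
  have hxidem : x * x = x := by
    calc x * x = (f * x * e) * (f * x * e) := by rw [hfxe]
      _ = f * (x * (e * f) * x * e) := by simp only [mul_assoc]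
      _ = f * x * e := by rw [hx2]; simp only [mul_assoc]
      _ = x := hfxe
  have hxef : x = e * f := by
    calc x = x⁻¹ := (aux_idem_inv hxidem).symm
      _ = (e * f)⁻¹⁻¹ := by rw [hx]
      _ = e * f := aux_inv_inv _
  show (e * f) * (e * f) = e * f
  rw [← hxef]; exact hxidem

/-- Idempotents commute. -/
lemma aux_idem_comm {e f : S} (he : IsIdempotentElem e) (hf : IsIdempotentElem f) :
    e * f = f * e := by
  have hef : IsIdempotentElem (e * f) := aux_idem_mul he hf
  have hfe : IsIdempotentElem (f * e) := aux_idem_mul hf he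
  have k1 : (e * f) * (f * e) * (e * f) = e * f := by
    calc (e * f) * (f * e) * (e * f)
        = e * ((f * f) * ((e * e) * f)) := by simp only [mul_assoc]
      _ = e * (f * (e * f)) := by rw [hf, he]
      _ = (e * f) * (e * f) := by simp only [mul_assoc]
      _ = e * f := hef
  have k2 : (f * e) * (e * f) * (f * e) = f * e := by
    calc (f * e) * (e * f) * (f * e)
        = f * ((e * e) * ((f * f) * e)) := by simp only [mul_assoc]
      _ = f * (e * (f * e)) := by rw [he, hf]
      _ = (f * e) * (f * e) := by simp only [mul_assoc]
      _ = f * e := hfe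
  have : f * e = (e * f)⁻¹ := inv_unique (e * f) (f * e) k1 k2
  rw [this, aux_idem_inv hef]

lemma aux_mul_inv_rev (a b : S) : (a * b)⁻¹ = b⁻¹ * a⁻¹ := by
  refine (inv_unique (a * b) (b⁻¹ * a⁻¹) ?_ ?_).symm
  · calc a * b * (b⁻¹ * a⁻¹) * (a * b)
        = a * ((b * b⁻¹) * (a⁻¹ * a)) * b := by simp only [mul_assoc]
      _ = a * ((a⁻¹ * a) * (b * b⁻¹)) * b := by
          rw [aux_idem_comm (aux_mul_inv_idem b) (aux_inv_mul_idem a)]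
      _ = (a * a⁻¹ * a) * (b * b⁻¹ * b) := by simp only [mul_assoc]
      _ = a * b := by rw [mul_inv_mul, mul_inv_mul]
  · calc b⁻¹ * a⁻¹ * (a * b) * (b⁻¹ * a⁻¹)
        = b⁻¹ * ((a⁻¹ * a) * (b * b⁻¹)) * a⁻¹ := by simp only [mul_assoc]
      _ = b⁻¹ * ((b * b⁻¹) * (a⁻¹ * a)) * a⁻¹ := by
          rw [aux_idem_comm (aux_inv_mul_idem a) (aux_mul_inv_idem b)]
      _ = (b⁻¹ * b * b⁻¹) * (a⁻¹ * a * a⁻¹) := by simp only [mul_assoc]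
      _ = b⁻¹ * a⁻¹ := by rw [inv_mul_inv, inv_mul_inv]

lemma aux_nle_refl (a : S) : nle a a := by
  show a = a * (a⁻¹ * a)
  rw [← mul_assoc, mul_inv_mul]

/-- If `a = b * e` for an idempotent `e`, then `a ≤ b`. -/
lemma aux_nle_of_mul_idem {a b e : S} (he : IsIdempotentElem e) (h : a = b * e) :
    nle a b := by
  have hainv : a⁻¹ = e * b⁻¹ := by
    rw [h, aux_mul_inv_rev, aux_idem_inv he]
  have hkey : a⁻¹ * a = (b⁻¹ * b) * e := by
    calc a⁻¹ * a = e * (b⁻¹ * b) * e := by rw [hainv, h]; simp only [mul_assoc]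
      _ = (b⁻¹ * b) * e * e := by rw [aux_idem_comm he (aux_inv_mul_idem b)]
      _ = (b⁻¹ * b) * e := by rw [mul_assoc, he]
  show a = b * (a⁻¹ * a)
  rw [hkey, ← mul_assoc, ← mul_assoc, mul_inv_mul, ← h]

/-- If `a = e * b` for an idempotent `e`, then `a ≤ b`. -/
lemma aux_nle_of_idem_mul {a b e : S} (he : IsIdempotentElem e) (h : a = e * b) :
    nle a b := by
  have hainv : a⁻¹ = b⁻¹ * e := by
    rw [h, aux_mul_inv_rev, aux_idem_inv he]
  show a = b * (a⁻¹ * a)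
  calc a = e * b := h
    _ = e * (b * b⁻¹ * b) := by rw [mul_inv_mul]
    _ = (e * (b * b⁻¹)) * b := by simp only [mul_assoc]
    _ = ((b * b⁻¹) * e) * b := by rw [aux_idem_comm he (aux_mul_inv_idem b)]
    _ = b * (b⁻¹ * (e * e) * b) := by rw [he]; simp only [mul_assoc]
    _ = b * ((b⁻¹ * e) * (e * b)) := by simp only [mul_assoc]
    _ = b * (a⁻¹ * a) := by rw [← hainv, ← h]

lemma aux_nle_trans {a b c : S} (hab : nle a b) (hbc : nle b c) : nle a c := by
  have h1 : a = b * (a⁻¹ * a) := hab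
  have h2 : b = c * (b⁻¹ * b) := hbc
  apply aux_nle_of_mul_idem
    (aux_idem_mul (aux_inv_mul_idem b) (aux_inv_mul_idem a))
  calc a = c * (b⁻¹ * b) * (a⁻¹ * a) := by rw [← h2, ← h1]
    _ = c * ((b⁻¹ * b) * (a⁻¹ * a)) := by simp only [mul_assoc]

lemma aux_nle_antisymm {a b : S} (hab : nle a b) (hba : nle b a) : a = b := by
  have h1 : a = b * (a⁻¹ * a) := hab
  have h2 : b = a * (b⁻¹ * b) := hba
  set e := a⁻¹ * a with hedef
  set f := b⁻¹ * b with hfdef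
  have he : IsIdempotentElem e := aux_inv_mul_idem a
  have hf : IsIdempotentElem f := aux_inv_mul_idem b
  have hb : b = b * (e * f) := by
    rw [← mul_assoc, ← h1, ← h2]
  have hbe : b * e = b := by
    calc b * e = (b * (e * f)) * e := by rw [← hb]
      _ = b * ((e * f) * e) := by simp only [mul_assoc]
      _ = b * ((f * e) * e) := by rw [aux_idem_comm he hf]
      _ = b * (f * (e * e)) := by simp only [mul_assoc]
      _ = b * (f * e) := by rw [he]
      _ = b * (e * f) := by rw [aux_idem_comm hf he]
      _ = b := by rw [← hb]
  rw [h1, hbe]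

end AuxLemmas

section ZeroLemmas
variable {S : Type*} [InverseSemigroupWithZero S]

open InverseSemigroup

lemma aux_zero_inv : (0 : S)⁻¹ = 0 :=
  (InverseSemigroup.inv_unique 0 0 (by rw [InverseSemigroupWithZero.zero_mul, InverseSemigroupWithZero.zero_mul])
    (by rw [InverseSemigroupWithZero.zero_mul, InverseSemigroupWithZero.zero_mul])).symm

lemma aux_nle_zero {a : S} (h : nle a (0 : S)) : a = 0 := by
  have : a = 0 * (a⁻¹ * a) := h
  rw [InverseSemigroupWithZero.zero_mul] at this; exact this

/-- Trichotomy in a ramified inverse semigroup with zero: compatible elements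
are orthogonal or comparable. -/
lemma aux_trichotomy
    (hram : ∀ a b c : S, nle a b → nle a c → a ≠ 0 → (nle b c ∨ nle c b))
    {a b : S} (hc : compat a b) : orth a b ∨ nle a b ∨ nle b a := by
  obtain ⟨h1, h2⟩ := hc
  set m := a * (b⁻¹ * b) with hm
  have hma : nle m a := aux_nle_of_mul_idem (aux_inv_mul_idem b) hm
  have hmb : nle m b := by
    apply aux_nle_of_idem_mul h2
    rw [hm, ← mul_assoc]
  by_cases hm0 : m = 0
  · left
    have hab : a * b⁻¹ = 0 := by
      have : a * b⁻¹ = m * b⁻¹ := by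
        rw [hm]
        calc a * b⁻¹ = a * (b⁻¹ * b * b⁻¹) := by rw [inv_mul_inv]
          _ = a * (b⁻¹ * b) * b⁻¹ := by simp only [mul_assoc]
      rw [this, hm0, InverseSemigroupWithZero.zero_mul]
    refine ⟨?_, hab⟩
    have hsym : a⁻¹ * b = b⁻¹ * a := by
      calc a⁻¹ * b = (a⁻¹ * b)⁻¹ := (aux_idem_inv h1).symm
        _ = b⁻¹ * a⁻¹⁻¹ := by rw [aux_mul_inv_rev]
        _ = b⁻¹ * a := by rw [aux_inv_inv]
    calc a⁻¹ * b = a⁻¹ * (b * b⁻¹ * b) := by rw [mul_inv_mul]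
      _ = (a⁻¹ * b) * (b⁻¹ * b) := by simp only [mul_assoc]
      _ = (b⁻¹ * a) * (b⁻¹ * b) := by rw [hsym]
      _ = b⁻¹ * (a * b⁻¹) * b := by simp only [mul_assoc]
      _ = 0 := by rw [hab, InverseSemigroupWithZero.mul_zero, InverseSemigroupWithZero.zero_mul]
  · right
    exact hram m a b hma hmb hm0

/-- Every element of a finite set has an `nle`-maximal element above it. -/
lemma aux_exists_max [DecidableEq S] (t : Finset S) : ∀ a ∈ t,
    ∃ b ∈ t, nle a b ∧ ∀ c ∈ t, nle b c → b = c := by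
  induction t using Finset.strongInduction with
  | _ t ih =>
    intro a ha
    by_cases hmax : ∀ c ∈ t, nle a c → a = c
    · exact ⟨a, ha, aux_nle_refl a, hmax⟩
    · push_neg at hmax
      obtain ⟨c, hc, hac, hne⟩ := hmax
      have hc' : c ∈ t.erase a := Finset.mem_erase.2 ⟨fun h => hne h.symm, hc⟩
      obtain ⟨b, hb, hcb, hbmax⟩ :=
        ih (t.erase a) (Finset.erase_ssubset ha) c hc'
      refine ⟨b, Finset.mem_of_mem_erase hb, aux_nle_trans hac hcb, ?_⟩
      intro d hd hbd
      by_cases hda : d = a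
      · subst hda
        have : b = d := aux_nle_antisymm hbd (aux_nle_trans hac hcb)
        exact this
      · exact hbmax d (Finset.mem_erase.2 ⟨hda, hd⟩) hbd

end ZeroLemmas

/-- In a ramified inverse semigroup with zero, every finitely generated compatible
order ideal `{a₁,…,aₙ}↓` equals `{b₁,…,bₘ}↓` for some pairwise orthogonal subset
`{b₁,…,bₘ}` of `{a₁,…,aₙ}`. -/
theorem stmt15 {S : Type*} [InverseSemigroupWithZero S]
    (hram : ∀ a b c : S, nle a b → nle a c → a ≠ 0 → (nle b c ∨ nle c b))
    (F : Finset S) (hF : ∀ a ∈ F, ∀ b ∈ F, compat a b) :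
    ∃ G : Finset S, G ⊆ F ∧ (∀ a ∈ G, ∀ b ∈ G, a ≠ b → orth a b) ∧
      {x : S | ∃ a ∈ F, nle x a} = {x : S | ∃ b ∈ G, nle x b} := by
  classical
  refine ⟨F.filter (fun b => ∀ c ∈ F, nle b c → b = c),
    Finset.filter_subset _ _, ?_, ?_⟩
  · intro a ha b hb hne
    rw [Finset.mem_filter] at ha hb
    rcases aux_trichotomy hram (hF a ha.1 b hb.1) with h | h | h
    · exact h
    · exact absurd (ha.2 b hb.1 h) hne
    · exact absurd (hb.2 a ha.1 h).symm hne
  · ext x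
    simp only [Set.mem_setOf_eq]
    constructor
    · rintro ⟨a, ha, hxa⟩
      obtain ⟨b, hb, hab, hmax⟩ := aux_exists_max F a ha
      exact ⟨b, Finset.mem_filter.2 ⟨hb, hmax⟩, aux_nle_trans hxa hab⟩
    · rintro ⟨b, hb, hxb⟩
      exact ⟨b, Finset.filter_subset _ _ hb, hxb⟩
end
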